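/- Let L > 0, T > 0. Let y : [0,T] × [0,L] → ℝ be continuous, once continuously differentiable in t and three times continuously differentiable in x (with all these partial derivatives jointly continuous), satisfying ∂_t y + ∂_x y + ∂_x³ y + y·∂_x y = 0 on [0,T] × [0,L] and y(t,0) = y(t,L) = 0 for all t ∈ [0,T]. Let Ψ : [0,T] × [0,L] → ℝ have the same regularity and satisfy ∂_t Ψ + ∂_x Ψ + ∂_x³ Ψ = 0 on [0,T] × [0,L] and Ψ(t,0) = Ψ(t,L) = ∂_xΨ(t,0) = ∂_xΨ(t,L) = 0 for all t ∈ [0,T]. Then ∫₀^L y(T,x)Ψ(T,x) dx − ∫₀^L y(0,x)Ψ(0,x) dx = (1/2)·∫₀^T ∫₀^L y(t,x)²·∂_xΨ(t,x) dx dt. -/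
import Mathlib


open Set MeasureTheory

/-- FTC on an interval with derivatives within the closed interval. -/
lemma ftc_aux {a b : ℝ} (hab : a ≤ b) {f f' : ℝ → ℝ}
    (hderiv : ∀ x ∈ Icc a b, HasDerivWithinAt f (f' x) (Icc a b) x)
    (hcont' : ContinuousOn f' (Icc a b)) :
    ∫ y in a..b, f' y = f b - f a := by
  apply intervalIntegral.integral_eq_sub_of_hasDeriv_right_of_le hab
  · exact fun x hx => (hderiv x hx).continuousWithinAt
  · intro x hx
    exact ((hderiv x (Ioo_subset_Icc_self hx)).hasDerivAt
      (Icc_mem_nhds hx.1 hx.2)).hasDerivWithinAt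
  · rw [intervalIntegrable_iff_integrableOn_Icc_of_le hab]
    exact hcont'.integrableOn_compact isCompact_Icc

/-- the key quadratic identity obtained by multiplying the nonlinear KdV
equation by a solution `Ψ` of the linear KdV equation with vanishing Dirichlet and
Neumann boundary data, and integrating by parts.  The functions `yt, yx, yxx, yxxx`
(resp. `Ψt, Ψx, Ψxx, Ψxxx`) are the partial derivatives of `y` (resp. `Ψ`), required
to exist on `[0,T] × [0,L]` and to be jointly continuous there. -/
theorem stmt17 (L T : ℝ) (hL : 0 < L) (hT : 0 < T)
    (y yt yx yxx yxxx Ψ Ψt Ψx Ψxx Ψxxx : ℝ → ℝ → ℝ)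
    -- joint continuity of y and its partial derivatives
    (hycont : ContinuousOn (fun q : ℝ × ℝ => y q.1 q.2) (Icc 0 T ×ˢ Icc 0 L))
    (hytcont : ContinuousOn (fun q : ℝ × ℝ => yt q.1 q.2) (Icc 0 T ×ˢ Icc 0 L))
    (hyxcont : ContinuousOn (fun q : ℝ × ℝ => yx q.1 q.2) (Icc 0 T ×ˢ Icc 0 L))
    (hyxxcont : ContinuousOn (fun q : ℝ × ℝ => yxx q.1 q.2) (Icc 0 T ×ˢ Icc 0 L))
    (hyxxxcont : ContinuousOn (fun q : ℝ × ℝ => yxxx q.1 q.2) (Icc 0 T ×ˢ Icc 0 L))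
    -- y is C¹ in t and C³ in x on [0,T] × [0,L]
    (hyt : ∀ t ∈ Icc 0 T, ∀ x ∈ Icc 0 L, HasDerivWithinAt (fun s => y s x) (yt t x) (Icc 0 T) t)
    (hyx : ∀ t ∈ Icc 0 T, ∀ x ∈ Icc 0 L, HasDerivWithinAt (y t) (yx t x) (Icc 0 L) x)
    (hyxx : ∀ t ∈ Icc 0 T, ∀ x ∈ Icc 0 L, HasDerivWithinAt (yx t) (yxx t x) (Icc 0 L) x)
    (hyxxx : ∀ t ∈ Icc 0 T, ∀ x ∈ Icc 0 L, HasDerivWithinAt (yxx t) (yxxx t x) (Icc 0 L) x)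
    -- y solves the nonlinear KdV equation with Dirichlet boundary conditions
    (hyKdV : ∀ t ∈ Icc 0 T, ∀ x ∈ Icc 0 L,
      yt t x + yx t x + yxxx t x + y t x * yx t x = 0)
    (hybd : ∀ t ∈ Icc 0 T, y t 0 = 0 ∧ y t L = 0)
    -- joint continuity of Ψ and its partial derivatives
    (hΨcont : ContinuousOn (fun q : ℝ × ℝ => Ψ q.1 q.2) (Icc 0 T ×ˢ Icc 0 L))
    (hΨtcont : ContinuousOn (fun q : ℝ × ℝ => Ψt q.1 q.2) (Icc 0 T ×ˢ Icc 0 L))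
    (hΨxcont : ContinuousOn (fun q : ℝ × ℝ => Ψx q.1 q.2) (Icc 0 T ×ˢ Icc 0 L))
    (hΨxxcont : ContinuousOn (fun q : ℝ × ℝ => Ψxx q.1 q.2) (Icc 0 T ×ˢ Icc 0 L))
    (hΨxxxcont : ContinuousOn (fun q : ℝ × ℝ => Ψxxx q.1 q.2) (Icc 0 T ×ˢ Icc 0 L))
    -- Ψ is C¹ in t and C³ in x on [0,T] × [0,L]
    (hΨt : ∀ t ∈ Icc 0 T, ∀ x ∈ Icc 0 L, HasDerivWithinAt (fun s => Ψ s x) (Ψt t x) (Icc 0 T) t)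
    (hΨx : ∀ t ∈ Icc 0 T, ∀ x ∈ Icc 0 L, HasDerivWithinAt (Ψ t) (Ψx t x) (Icc 0 L) x)
    (hΨxx : ∀ t ∈ Icc 0 T, ∀ x ∈ Icc 0 L, HasDerivWithinAt (Ψx t) (Ψxx t x) (Icc 0 L) x)
    (hΨxxx : ∀ t ∈ Icc 0 T, ∀ x ∈ Icc 0 L, HasDerivWithinAt (Ψxx t) (Ψxxx t x) (Icc 0 L) x)
    -- Ψ solves the linear KdV equation with vanishing Dirichlet and Neumann data
    (hΨKdV : ∀ t ∈ Icc 0 T, ∀ x ∈ Icc 0 L, Ψt t x + Ψx t x + Ψxxx t x = 0)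
    (hΨbd : ∀ t ∈ Icc 0 T, Ψ t 0 = 0 ∧ Ψ t L = 0 ∧ Ψx t 0 = 0 ∧ Ψx t L = 0) :
    (∫ x in (0:ℝ)..L, y T x * Ψ T x) - (∫ x in (0:ℝ)..L, y 0 x * Ψ 0 x)
      = (1 / 2) * ∫ t in (0:ℝ)..T, ∫ x in (0:ℝ)..L, (y t x) ^ 2 * Ψx t x := by
  have hT' : (0:ℝ) ≤ T := hT.le
  have hL' : (0:ℝ) ≤ L := hL.le
  -- slices in x for fixed t
  have sliceX : ∀ (f : ℝ → ℝ → ℝ),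
      ContinuousOn (fun q : ℝ × ℝ => f q.1 q.2) (Icc 0 T ×ˢ Icc 0 L) →
      ∀ t ∈ Icc (0:ℝ) T, ContinuousOn (f t) (Icc 0 L) := by
    intro f hf t ht
    exact hf.comp (Continuous.continuousOn (continuous_const.prodMk continuous_id))
      (fun x hx => ⟨ht, hx⟩)
  -- slices in t for fixed x
  have sliceT : ∀ (f : ℝ → ℝ → ℝ),
      ContinuousOn (fun q : ℝ × ℝ => f q.1 q.2) (Icc 0 T ×ˢ Icc 0 L) →
      ∀ x ∈ Icc (0:ℝ) L, ContinuousOn (fun t => f t x) (Icc 0 T) := by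
    intro f hf x hx
    exact hf.comp (Continuous.continuousOn (continuous_id.prodMk continuous_const))
      (fun t ht => ⟨ht, hx⟩)
  set F : ℝ → ℝ → ℝ := fun t x => yt t x * Ψ t x + y t x * Ψt t x with hF
  -- Step A: time FTC for each x
  have stepA : ∀ x ∈ Icc (0:ℝ) L,
      (∫ t in (0:ℝ)..T, F t x) = y T x * Ψ T x - y 0 x * Ψ 0 x := by
    intro x hx
    apply ftc_aux hT'
    · intro t ht
      exact (hyt t ht x hx).mul (hΨt t ht x hx)
    · exact ((sliceT yt hytcont x hx).mul (sliceT Ψ hΨcont x hx)).add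
        ((sliceT y hycont x hx).mul (sliceT Ψt hΨtcont x hx))
  -- Step C: spatial integration by parts for each t
  have stepC : ∀ t ∈ Icc (0:ℝ) T,
      (∫ x in (0:ℝ)..L, F t x) = (1/2) * ∫ x in (0:ℝ)..L, (y t x) ^ 2 * Ψx t x := by
    intro t ht
    set W : ℝ → ℝ := fun x => -(y t x * Ψ t x)
      - (yxx t x * Ψ t x - yx t x * Ψx t x + y t x * Ψxx t x)
      - y t x ^ 2 / 2 * Ψ t x with hWdef
    have hW : ∀ x ∈ Icc (0:ℝ) L,
        HasDerivWithinAt W (F t x - 1/2 * (y t x) ^ 2 * Ψx t x) (Icc 0 L) x := by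
      intro x hx
      have h1 := (hyx t ht x hx).mul (hΨx t ht x hx)
      have h2 := (hyxxx t ht x hx).mul (hΨx t ht x hx)
      have h3 := (hyxx t ht x hx).mul (hΨxx t ht x hx)
      have h4 := (hyx t ht x hx).mul (hΨxxx t ht x hx)
      have h5 := (((hyx t ht x hx).pow 2).div_const 2).mul (hΨx t ht x hx)
      have h := (h1.neg.sub ((h2.sub h3).add h4)).sub h5
      have e1 := hyKdV t ht x hx
      have e2 := hΨKdV t ht x hx
      have hEq : F t x - 1/2 * (y t x) ^ 2 * Ψx t x
          = -(yx t x * Ψ t x + y t x * Ψx t x)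
            - (yxxx t x * Ψ t x + yxx t x * Ψx t x
              - (yxx t x * Ψx t x + yx t x * Ψxx t x)
              + (yx t x * Ψxx t x + y t x * Ψxxx t x))
            - ((↑2 * y t x ^ (2-1) * yx t x) / 2 * Ψ t x + y t x ^ 2 / 2 * Ψx t x) := by
        simp only [hF]
        push_cast
        linear_combination Ψ t x * e1 + y t x * e2
      rw [hEq]
      exact h
    have hWL : W L = 0 := by
      obtain ⟨-, hy2⟩ := hybd t ht
      obtain ⟨-, hp2, -, hp4⟩ := hΨbd t ht
      simp [hWdef, hy2, hp2, hp4]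
    have hW0 : W 0 = 0 := by
      obtain ⟨hy1, -⟩ := hybd t ht
      obtain ⟨hp1, -, hp3, -⟩ := hΨbd t ht
      simp [hWdef, hy1, hp1, hp3]
    have hFcont : ContinuousOn (fun x => F t x) (Icc 0 L) :=
      ((sliceX yt hytcont t ht).mul (sliceX Ψ hΨcont t ht)).add
        ((sliceX y hycont t ht).mul (sliceX Ψt hΨtcont t ht))
    have hGcont : ContinuousOn (fun x => (y t x) ^ 2 * Ψx t x) (Icc 0 L) :=
      ((sliceX y hycont t ht).pow 2).mul (sliceX Ψx hΨxcont t ht)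
    have hHcont : ContinuousOn (fun x => 1/2 * (y t x) ^ 2 * Ψx t x) (Icc 0 L) :=
      (continuousOn_const.mul ((sliceX y hycont t ht).pow 2)).mul (sliceX Ψx hΨxcont t ht)
    have hftc : (∫ x in (0:ℝ)..L, (F t x - 1/2 * (y t x) ^ 2 * Ψx t x)) = 0 := by
      rw [ftc_aux hL' hW (hFcont.sub hHcont)]
      rw [hWL, hW0]; ring
    have hFi : IntervalIntegrable (fun x => F t x) volume 0 L := by
      apply ContinuousOn.intervalIntegrable; rwa [uIcc_of_le hL']
    have hGi : IntervalIntegrable (fun x => 1/2 * (y t x) ^ 2 * Ψx t x) volume 0 L := by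
      apply ContinuousOn.intervalIntegrable; rwa [uIcc_of_le hL']
    rw [intervalIntegral.integral_sub hFi hGi] at hftc
    have : (∫ x in (0:ℝ)..L, 1/2 * (y t x) ^ 2 * Ψx t x)
        = (1/2) * ∫ x in (0:ℝ)..L, (y t x) ^ 2 * Ψx t x := by
      rw [← intervalIntegral.integral_const_mul]
      congr 1; ext x; ring
    linarith [hftc, this]
  -- Step B: Fubini
  have hFjoint : ContinuousOn (fun q : ℝ × ℝ => F q.1 q.2) (Icc 0 T ×ˢ Icc 0 L) :=
    (hytcont.mul hΨcont).add (hycont.mul hΨtcont)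
  have stepB : (∫ x in (0:ℝ)..L, ∫ t in (0:ℝ)..T, F t x)
      = ∫ t in (0:ℝ)..T, ∫ x in (0:ℝ)..L, F t x := by
    rw [intervalIntegral.integral_of_le hL', intervalIntegral.integral_of_le hT']
    simp_rw [intervalIntegral.integral_of_le hT', intervalIntegral.integral_of_le hL']
    apply MeasureTheory.integral_integral_swap (f := fun x t => F t x)
    rw [Measure.prod_restrict]
    have hc : ContinuousOn (Function.uncurry fun x t => F t x) (Icc 0 L ×ˢ Icc 0 T) := by
      have : (Function.uncurry fun x t => F t x)
          = (fun q : ℝ × ℝ => F q.1 q.2) ∘ Prod.swap := rfl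
      rw [this]
      exact hFjoint.comp continuous_swap.continuousOn
        (fun q hq => ⟨hq.2, hq.1⟩)
    exact (hc.integrableOn_compact (isCompact_Icc.prod isCompact_Icc)).mono_set
      (prod_mono Ioc_subset_Icc_self Ioc_subset_Icc_self)
  -- assemble
  have hL1 : IntervalIntegrable (fun x => y T x * Ψ T x) volume 0 L := by
    apply ContinuousOn.intervalIntegrable
    rw [uIcc_of_le hL']
    exact (sliceX y hycont T (right_mem_Icc.2 hT')).mul (sliceX Ψ hΨcont T (right_mem_Icc.2 hT'))
  have hL2 : IntervalIntegrable (fun x => y 0 x * Ψ 0 x) volume 0 L := by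
    apply ContinuousOn.intervalIntegrable
    rw [uIcc_of_le hL']
    exact (sliceX y hycont 0 (left_mem_Icc.2 hT')).mul (sliceX Ψ hΨcont 0 (left_mem_Icc.2 hT'))
  calc (∫ x in (0:ℝ)..L, y T x * Ψ T x) - (∫ x in (0:ℝ)..L, y 0 x * Ψ 0 x)
      = ∫ x in (0:ℝ)..L, (y T x * Ψ T x - y 0 x * Ψ 0 x) :=
        (intervalIntegral.integral_sub hL1 hL2).symm
    _ = ∫ x in (0:ℝ)..L, ∫ t in (0:ℝ)..T, F t x := by
        apply intervalIntegral.integral_congr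
        intro x hx
        rw [uIcc_of_le hL'] at hx
        exact (stepA x hx).symm
    _ = ∫ t in (0:ℝ)..T, ∫ x in (0:ℝ)..L, F t x := stepB
    _ = ∫ t in (0:ℝ)..T, (1/2) * ∫ x in (0:ℝ)..L, (y t x) ^ 2 * Ψx t x := by
        apply intervalIntegral.integral_congr
        intro t ht
        rw [uIcc_of_le hT'] at ht
        exact stepC t ht
    _ = (1 / 2) * ∫ t in (0:ℝ)..T, ∫ x in (0:ℝ)..L, (y t x) ^ 2 * Ψx t x := by
        rw [intervalIntegral.integral_const_mul]
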